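/- Equivalent frames have the same excess: if (f_n) is a frame in H, T : H → K a bounded invertible operator, and g_n = T f_n, then dim(Ker U*) = dim(Ker V*) where U, V are the analysis operators of (f_n), (g_n). -/

import Mathlib

open scoped InnerProductSpace

noncomputable section

abbrev ell2 : Type := lp (fun _ : ℕ => ℂ) 2

def IsFrame {H : Type*} [NormedAddCommGroup H] [InnerProductSpace ℂ H]
    (f : ℕ → H) : Prop :=
  ∃ A B : ℝ, 0 < A ∧ 0 < B ∧ ∀ x : H,
    A * ‖x‖ ^ 2 ≤ ∑' n, ‖⟪x, f n⟫_ℂ‖ ^ 2 ∧ ∑' n, ‖⟪x, f n⟫_ℂ‖ ^ 2 ≤ B * ‖x‖ ^ 2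

def IsAnalysisOp {H : Type*} [NormedAddCommGroup H] [InnerProductSpace ℂ H]
    (f : ℕ → H) (U : H →L[ℂ] ell2) : Prop :=
  ∀ (x : H) (n : ℕ), (U x : ∀ _ : ℕ, ℂ) n = ⟪x, f n⟫_ℂ

/-- Equivalent frames have the same excess. -/
theorem equivalent_frames_same_excess
    {H K : Type*} [NormedAddCommGroup H] [InnerProductSpace ℂ H] [CompleteSpace H]
    [NormedAddCommGroup K] [InnerProductSpace ℂ K] [CompleteSpace K]
    (f : ℕ → H) (hf : IsFrame f)
    (T : H ≃L[ℂ] K) (g : ℕ → K) (hg : ∀ n, g n = T (f n))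
    (U : H →L[ℂ] ell2) (hU : IsAnalysisOp f U)
    (V : K →L[ℂ] ell2) (hV : IsAnalysisOp g V) :
    Module.rank ℂ (LinearMap.ker (ContinuousLinearMap.adjoint U : ell2 →ₗ[ℂ] H)) =
      Module.rank ℂ (LinearMap.ker (ContinuousLinearMap.adjoint V : ell2 →ₗ[ℂ] K)) := by
  have hVeq : V = U ∘L (ContinuousLinearMap.adjoint (T : H →L[ℂ] K)) := by
    ext x n
    have h1 := hV x n
    have h2 := hU ((ContinuousLinearMap.adjoint (T : H →L[ℂ] K)) x) n
    simp only [ContinuousLinearMap.comp_apply]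
    rw [h1, h2, hg, ContinuousLinearMap.adjoint_inner_left]
    rfl
  have hadj : ContinuousLinearMap.adjoint V =
      (T : H →L[ℂ] K) ∘L ContinuousLinearMap.adjoint U := by
    rw [hVeq, ContinuousLinearMap.adjoint_comp, ContinuousLinearMap.adjoint_adjoint]
  have hker : LinearMap.ker (ContinuousLinearMap.adjoint V : ell2 →ₗ[ℂ] K) =
      LinearMap.ker (ContinuousLinearMap.adjoint U : ell2 →ₗ[ℂ] H) := by
    ext y
    simp only [LinearMap.mem_ker, hadj, ContinuousLinearMap.coe_comp', Function.comp_apply,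
      ContinuousLinearMap.coe_coe]
    constructor
    · intro h
      have := T.injective (by simpa using h)
      simpa using this
    · intro h
      simp [h]
  rw [hker]
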